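/- Let φ_i : X_i → Y_i (i = 1, …, n) be essential epimorphisms in an abelian category. Then the induced morphism φ_1 ⊕ … ⊕ φ_n : X_1 ⊕ … ⊕ X_n → Y_1 ⊕ … ⊕ Y_n between the direct sums is an essential epimorphism. -/

import Mathlib

open CategoryTheory CategoryTheory.Limits

attribute [local instance] CategoryTheory.Abelian.hasFiniteBiproducts

universe v u

/-- An epimorphism `φ : X ⟶ Y` is *essential* if every morphism `α : X' ⟶ X` for which
`α ≫ φ` is an epimorphism is itself an epimorphism. -/
def IsEssentialEpi {A : Type u} [Category.{v} A] {X Y : A} (φ : X ⟶ Y) : Prop :=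
  Epi φ ∧ ∀ ⦃X' : A⦄ (α : X' ⟶ X), Epi (α ≫ φ) → Epi α

section GeneralLemmas

variable {A : Type u} [Category.{v} A]

theorem isEssentialEpi_comp {X Y Z : A} {f : X ⟶ Y} {g : Y ⟶ Z}
    (hf : IsEssentialEpi f) (hg : IsEssentialEpi g) : IsEssentialEpi (f ≫ g) := by
  have : Epi f := hf.1
  have : Epi g := hg.1
  refine ⟨epi_comp f g, fun Z' α hα => ?_⟩
  rw [← Category.assoc] at hα
  exact hf.2 α (hg.2 (α ≫ f) hα)

theorem isEssentialEpi_of_isIso {X Y : A} (f : X ⟶ Y) [IsIso f] : IsEssentialEpi f := by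
  refine ⟨inferInstance, fun Z' α hα => ?_⟩
  have : Epi ((α ≫ f) ≫ inv f) := epi_comp _ _
  simpa using this

end GeneralLemmas

section Key

variable {A : Type u} [Category.{v} A] [Abelian A]

/-- Key lemma: if `φ` is an essential epi, so is `φ ⊞ 𝟙 W`. -/
theorem isEssentialEpi_map_id {X Y : A} {φ : X ⟶ Y} (hφ : IsEssentialEpi φ) (W : A) :
    IsEssentialEpi (biprod.map φ (𝟙 W)) := by
  have hepi : Epi φ := hφ.1
  constructor
  · -- the map is an epimorphism
    refine Preadditive.epi_of_cancel_zero _ (fun {C} c hc => ?_)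
    have h1 : φ ≫ biprod.inl ≫ c = 0 := by
      have := biprod.inl ≫= hc
      simpa [biprod.inl_map_assoc] using this
    have h2 : biprod.inr ≫ c = 0 := by
      have := biprod.inr ≫= hc
      simpa using this
    have h1' : biprod.inl ≫ c = 0 := zero_of_epi_comp φ h1
    apply biprod.hom_ext' <;> simp [h1', h2]
  · intro Z α hα
    set k : kernel φ ⟶ X := kernel.ι φ with hk
    set Φ := biprod.map φ (𝟙 W) with hΦ
    set α' : Z ⊞ kernel φ ⟶ X ⊞ W := biprod.desc α (k ≫ biprod.inl) with hα'
    -- Step 1 : α' is epi ("image of α plus kernel is everything")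
    have hα'epi : Epi α' := by
      refine Preadditive.epi_of_cancel_zero _ (fun {C} c hc => ?_)
      have hZc : α ≫ c = 0 := by
        have := biprod.inl ≫= hc; simpa [hα'] using this
      have hKc : k ≫ biprod.inl ≫ c = 0 := by
        have := biprod.inr ≫= hc; simpa [hα'] using this
      set d : Y ⊞ W ⟶ C :=
        biprod.desc (Abelian.epiDesc φ (biprod.inl ≫ c) hKc) (biprod.inr ≫ c) with hd
      have hΦd : Φ ≫ d = c := by
        apply biprod.hom_ext'
        · simp [hΦ, hd, biprod.inl_map_assoc, Abelian.comp_epiDesc]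
        · simp [hΦ, hd]
      have : (α ≫ Φ) ≫ d = 0 := by
        rw [Category.assoc, hΦd, hZc]
      have hd0 : d = 0 := zero_of_epi_comp (α ≫ Φ) this
      rw [← hΦd, hd0, comp_zero]
    -- Step 2 : pullback diagram chase (the "modular law" argument)
    set P₀ := pullback α (biprod.inl : X ⟶ X ⊞ W) with hP₀
    set q₀ : P₀ ⟶ X := pullback.snd α biprod.inl with hq₀
    set β₀ : P₀ ⟶ Z := pullback.fst α biprod.inl with hβ₀
    set P := pullback α' (biprod.inl : X ⟶ X ⊞ W) with hP
    set q : P ⟶ X := pullback.snd α' biprod.inl with hq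
    set p : P ⟶ Z ⊞ kernel φ := pullback.fst α' biprod.inl with hp
    have hqepi : Epi q := by
      rw [hq]; infer_instance
    set β : P ⟶ Z := p ≫ biprod.fst with hβ
    set γ : P ⟶ kernel φ := p ≫ biprod.snd with hγ
    have hdesc : p ≫ α' = β ≫ α + γ ≫ (k ≫ biprod.inl) := by
      rw [hα', biprod.desc_eq, Preadditive.comp_add, hβ, hγ]
      simp [Category.assoc]
    have hcond : p ≫ α' = q ≫ biprod.inl := pullback.condition
    have ht : β ≫ α = (q - γ ≫ k) ≫ biprod.inl := by
      rw [Preadditive.sub_comp, ← hcond, hdesc]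
      abel_nf
      simp [Category.assoc]
    set t : P ⟶ P₀ := pullback.lift β (q - γ ≫ k) ht with htdef
    have htq : t ≫ q₀ = q - γ ≫ k := by rw [htdef, hq₀]; exact pullback.lift_snd _ _ _
    have hqφ : q ≫ φ = t ≫ (q₀ ≫ φ) := by
      rw [← Category.assoc, htq, Preadditive.sub_comp, Category.assoc, kernel.condition,
        comp_zero, sub_zero]
    have : Epi (q ≫ φ) := epi_comp _ _
    rw [hqφ] at this
    have hq₀φ : Epi (q₀ ≫ φ) := epi_of_epi t _
    have hq₀epi : Epi q₀ := hφ.2 q₀ hq₀φ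
    -- Step 3 : conclude that α is epi
    refine Preadditive.epi_of_cancel_zero _ (fun {C} c hc => ?_)
    have hinl : biprod.inl ≫ c = 0 := by
      apply zero_of_epi_comp q₀
      rw [← Category.assoc, ← pullback.condition, Category.assoc, hc, comp_zero]
    have : α' ≫ c = 0 := by
      apply biprod.hom_ext'
      · simpa [hα'] using hc
      · simp [hα', Category.assoc, hinl]
    exact zero_of_epi_comp α' this

theorem id_map_eq_braid {W X' Y' : A} (ψ : X' ⟶ Y') :
    biprod.map (𝟙 W) ψ =
      (biprod.braiding W X').hom ≫ biprod.map ψ (𝟙 W) ≫ (biprod.braiding Y' W).hom := by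
  apply biprod.hom_ext' <;> apply biprod.hom_ext <;> simp

theorem isEssentialEpi_id_map {W X' Y' : A} {ψ : X' ⟶ Y'} (hψ : IsEssentialEpi ψ) :
    IsEssentialEpi (biprod.map (𝟙 W) ψ) := by
  rw [id_map_eq_braid]
  exact isEssentialEpi_comp (isEssentialEpi_of_isIso _)
    (isEssentialEpi_comp (isEssentialEpi_map_id hψ W) (isEssentialEpi_of_isIso _))

theorem isEssentialEpi_biprod_map {X₁ Y₁ X₂ Y₂ : A} {φ : X₁ ⟶ Y₁} {ψ : X₂ ⟶ Y₂}
    (hφ : IsEssentialEpi φ) (hψ : IsEssentialEpi ψ) : IsEssentialEpi (biprod.map φ ψ) := by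
  have hsplit : biprod.map φ ψ = biprod.map φ (𝟙 X₂) ≫ biprod.map (𝟙 Y₁) ψ := by
    apply biprod.hom_ext' <;> simp
  rw [hsplit]
  exact isEssentialEpi_comp (isEssentialEpi_map_id hφ X₂) (isEssentialEpi_id_map hψ)

/-- The biproduct over `Fin (n+1)` splits off the first summand. -/
noncomputable def biproductFinSuccIso (n : ℕ) (F : Fin (n + 1) → A) :
    (⨁ F) ≅ F 0 ⊞ ⨁ (fun i : Fin n => F i.succ) where
  hom := biprod.lift (biproduct.π F 0) (biproduct.lift fun i => biproduct.π F i.succ)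
  inv := biprod.desc (biproduct.ι F 0) (biproduct.desc fun i => biproduct.ι F i.succ)
  hom_inv_id := by
    rw [biprod.lift_desc, biproduct.lift_desc, ← biproduct.total, Fin.sum_univ_succ]
  inv_hom_id := by
    apply biprod.hom_ext'
    · apply biprod.hom_ext
      · simp
      · apply biproduct.hom_ext
        intro j'
        simp [biproduct.ι_π_ne _ (Ne.symm (Fin.succ_ne_zero j'))]
    · apply biprod.hom_ext
      · apply biproduct.hom_ext'
        intro j
        simp [biproduct.ι_π_ne _ (Fin.succ_ne_zero j)]
      · apply biproduct.hom_ext'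
        intro j
        apply biproduct.hom_ext
        intro j'
        by_cases hj : j = j'
        · subst hj; simp
        · simp [biproduct.ι_π_ne _ (fun h => hj (Fin.succ_injective _ h)),
            biproduct.ι_π_ne _ hj]

theorem finSucc_naturality (n : ℕ) (X Y : Fin (n + 1) → A) (φ : ∀ i, X i ⟶ Y i) :
    biproduct.map φ ≫ (biproductFinSuccIso n Y).hom =
      (biproductFinSuccIso n X).hom ≫
        biprod.map (φ 0) (biproduct.map fun i : Fin n => φ i.succ) := by
  apply biprod.hom_ext
  · simp [biproductFinSuccIso]
  · apply biproduct.hom_ext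
    intro j
    simp [biproductFinSuccIso]

end Key

/-- Let `φ i : X i ⟶ Y i` (`i = 1, …, n`) be essential epimorphisms in an abelian
category.  Then the induced morphism `φ 1 ⊕ … ⊕ φ n` between the direct sums is an
essential epimorphism. -/
theorem essentialEpi_biproduct_map {A : Type u} [Category.{v} A] [Abelian A] (n : ℕ)
    (X Y : Fin n → A) (φ : ∀ i, X i ⟶ Y i) (h : ∀ i, IsEssentialEpi (φ i)) :
    IsEssentialEpi (biproduct.map φ) := by
  induction n with
  | zero =>
    constructor
    · constructor
      intro Q g g' _
      apply biproduct.hom_ext'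
      intro j
      exact j.elim0
    · intro Z α _
      constructor
      intro Q g g' _
      apply biproduct.hom_ext'
      intro j
      exact j.elim0
  | succ n ih =>
    have htail : IsEssentialEpi (biproduct.map fun i : Fin n => φ i.succ) :=
      ih (fun i => X i.succ) (fun i => Y i.succ) (fun i => φ i.succ) (fun i => h i.succ)
    have hbin := isEssentialEpi_biprod_map (h 0) htail
    have heq : biproduct.map φ =
        (biproductFinSuccIso n X).hom ≫
          (biprod.map (φ 0) (biproduct.map fun i : Fin n => φ i.succ) ≫
            (biproductFinSuccIso n Y).inv) := by
      rw [← Category.assoc, Iso.eq_comp_inv]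
      exact finSucc_naturality n X Y φ
    rw [heq]
    exact isEssentialEpi_comp (isEssentialEpi_of_isIso _)
      (isEssentialEpi_comp hbin (isEssentialEpi_of_isIso _))
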